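/- For v_0 = 2/3 and v_1 = 1, the maximum, over all pure local strategy profiles that are Nash equilibria of NC_00(C_5) with the uniform type distribution, of the social welfare (the average over the 5 players of their expected payoffs) equals 23/30. -/

import Mathlib

open Finset

/-- The 6 questions/types of the game on the 5-cycle: `none` is `Tₐ = 11111`;
`some i` is the question `Tᵢ` giving input bit 1 to player `i` and 0 to the others. -/
abbrev C5Type := Option (ZMod 5)

/-- Input (type) bit of player `j` in question `t` of `MCG(C₅)`/`NC₀₀(C₅)`. -/
def inputBit : C5Type → ZMod 5 → ZMod 2
  | none, _ => 1
  | some i, j => if j = i then 1 else 0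

/-- The involved set of question `t`: all five players for `Tₐ`;
`{i-1, i, i+1}` for `Tᵢ`. -/
def involvedSet : C5Type → Finset (ZMod 5)
  | none => Finset.univ
  | some i => {i - 1, i, i + 1}

/-- The target parity bit of question `t`: `1` for `Tₐ` and `0` for each `Tᵢ`. -/
def targetBit : C5Type → ZMod 2
  | none => 1
  | some _ => 0

/-- Payoff of player `j` on (answer profile `s`, type `t`) in `NC₀₀(C₅)`:
`v_{s j}` if `s` wins on `t`, else `0`. -/
noncomputable def payoffOf (v0 v1 : ℝ) (j : ZMod 5) (s : ZMod 5 → ZMod 2)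
    (t : C5Type) : ℝ :=
  if ∑ k ∈ involvedSet t, s k = targetBit t then (if s j = 1 then v1 else v0) else 0

/-- Expected payoff of player `j` under the pure local strategy profile `f`
(player `i` answers `f i b` on type bit `b`), with the type uniform on the 6 types. -/
noncomputable def pureUtil (v0 v1 : ℝ) (f : ZMod 5 → ZMod 2 → ZMod 2) (j : ZMod 5) : ℝ :=
  (∑ t : C5Type, payoffOf v0 v1 j (fun i => f i (inputBit t i)) t) / 6

/-- The pure local strategy profile `f` is a Nash equilibrium of `NC₀₀(C₅)` with
the uniform type distribution: no player can strictly increase their expected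
payoff by unilaterally replacing their local function. -/
def IsNashEq (v0 v1 : ℝ) (f : ZMod 5 → ZMod 2 → ZMod 2) : Prop :=
  ∀ (i : ZMod 5) (g : ZMod 2 → ZMod 2),
    pureUtil v0 v1 (Function.update f i g) i ≤ pureUtil v0 v1 f i

/-! ### Auxiliary machinery: scaled natural-number utilities -/

/-- Scaled (×3) payoff contribution of type `Tᵢ` to player `j`, in terms of the
answer-on-0 vector `a` and answer-on-1 vector `b`. -/
def term (a b : ZMod 5 → ZMod 2) (j i : ZMod 5) : ℕ :=
  if a (i-1) + b i + a (i+1) = 0 then (if (if j = i then b j else a j) = 1 then 3 else 2) else 0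

/-- Scaled (×3) total utility of player `j`. -/
def uE (a b : ZMod 5 → ZMod 2) (j : ZMod 5) : ℕ :=
  (if b 0 + b 1 + b 2 + b 3 + b 4 = 1 then (if b j = 1 then 3 else 2) else 0)
  + term a b j 0 + term a b j 1 + term a b j 2 + term a b j 3 + term a b j 4

set_option maxRecDepth 100000 in
set_option maxHeartbeats 2000000 in
theorem keyE : ∀ a b : ZMod 5 → ZMod 2,
    (∀ (i : ZMod 5) (g0 g1 : ZMod 2),
      uE (Function.update a i g0) (Function.update b i g1) i ≤ uE a b i) →
    uE a b 0 + uE a b 1 + uE a b 2 + uE a b 3 + uE a b 4 ≤ 69 := by decide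

lemma zmod5_sum_univ {M : Type*} [AddCommMonoid M] (g : ZMod 5 → M) :
    ∑ x : ZMod 5, g x = g 0 + g 1 + g 2 + g 3 + g 4 := by
  rw [show (univ : Finset (ZMod 5)) = {0,1,2,3,4} from by decide]
  rw [Finset.sum_insert (by decide), Finset.sum_insert (by decide),
    Finset.sum_insert (by decide), Finset.sum_insert (by decide), Finset.sum_singleton]
  simp [add_assoc]

lemma tri_sum {M : Type*} [AddCommMonoid M] (i : ZMod 5) (g : ZMod 5 → M) :
    ∑ k ∈ ({i - 1, i, i + 1} : Finset (ZMod 5)), g k = g (i-1) + g i + g (i+1) := by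
  rw [Finset.sum_insert (by revert i; decide), Finset.sum_insert (by revert i; decide),
    Finset.sum_singleton, add_assoc]

lemma payoff_eq (j : ZMod 5) (s : ZMod 5 → ZMod 2) (t : C5Type) :
    payoffOf (2/3) 1 j s t =
      ((if ∑ k ∈ involvedSet t, s k = targetBit t then (if s j = 1 then 3 else 2) else 0 : ℕ) : ℝ) / 3 := by
  unfold payoffOf
  split_ifs <;> norm_num

lemma pureUtil_eq (f : ZMod 5 → ZMod 2 → ZMod 2) (j : ZMod 5) :
    pureUtil (2/3) 1 f j = (uE (fun i => f i 0) (fun i => f i 1) j : ℝ) / 18 := by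
  have hexp : (uE (fun i => f i 0) (fun i => f i 1) j : ℕ) =
      ∑ t : C5Type, (if ∑ k ∈ involvedSet t, f k (inputBit t k) = targetBit t
        then (if f j (inputBit t j) = 1 then 3 else 2) else 0 : ℕ) := by
    rw [Fintype.sum_option, zmod5_sum_univ]
    simp only [involvedSet, targetBit, inputBit, tri_sum, zmod5_sum_univ, uE, term]
    simp only [apply_ite (f j)]
    norm_num
    simp (config := { decide := true }) only [if_false]
    exact (show ∀ a b c d e g : ℕ, a+b+c+d+e+g = a+(b+c+d+e+g) by intros; omega) _ _ _ _ _ _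
  unfold pureUtil
  simp only [payoff_eq]
  rw [← Finset.sum_div, ← Nat.cast_sum, ← hexp]
  ring

lemma update_comp (f : ZMod 5 → ZMod 2 → ZMod 2) (i : ZMod 5) (g : ZMod 2 → ZMod 2)
    (x : ZMod 2) : (fun k => Function.update f i g k x) =
      Function.update (fun k => f k x) i (g x) := by
  funext k
  by_cases h : k = i <;> simp [Function.update, h]

/-- The witness profile: players 0,1 echo their bit; players 2,3,4 always answer 1. -/
def a0 : ZMod 5 → ZMod 2 := fun k => if k = 0 ∨ k = 1 then 0 else 1
def b0 : ZMod 5 → ZMod 2 := fun _ => 1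
def f0 : ZMod 5 → ZMod 2 → ZMod 2 := fun i x => if x = 0 then a0 i else b0 i

lemma f0_comp0 : (fun k => f0 k 0) = a0 := by funext k; simp [f0]
lemma f0_comp1 : (fun k => f0 k 1) = b0 := by
  funext k; simp [f0, show (1 : ZMod 2) ≠ 0 from by decide]

theorem best_nash_social_welfare_NC00 :
    IsGreatest {x : ℝ | ∃ f : ZMod 5 → ZMod 2 → ZMod 2,
        IsNashEq (2/3) 1 f ∧ x = (∑ j : ZMod 5, pureUtil (2/3) 1 f j) / 5}
      (23 / 30) := by
  constructor
  · -- membership: witness profile f0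
    refine ⟨f0, ?_, ?_⟩
    · intro i g
      rw [pureUtil_eq, pureUtil_eq, update_comp, update_comp, f0_comp0, f0_comp1]
      have h : uE (Function.update a0 i (g 0)) (Function.update b0 i (g 1)) i
          ≤ uE a0 b0 i := by
        generalize g 0 = x; generalize g 1 = y
        revert i x y; decide
      have h' := (Nat.cast_le (α := ℝ)).mpr h
      gcongr
    · simp only [pureUtil_eq, f0_comp0, f0_comp1]
      rw [zmod5_sum_univ (fun j => (uE a0 b0 j : ℝ) / 18)]
      rw [show uE a0 b0 0 = 12 from by decide, show uE a0 b0 1 = 12 from by decide,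
        show uE a0 b0 2 = 15 from by decide, show uE a0 b0 3 = 15 from by decide,
        show uE a0 b0 4 = 15 from by decide]
      norm_num
  · -- upper bound
    rintro x ⟨f, hN, rfl⟩
    have key : uE (fun i => f i 0) (fun i => f i 1) 0 + uE (fun i => f i 0) (fun i => f i 1) 1
        + uE (fun i => f i 0) (fun i => f i 1) 2 + uE (fun i => f i 0) (fun i => f i 1) 3
        + uE (fun i => f i 0) (fun i => f i 1) 4 ≤ 69 := by
      apply keyE
      intro i g0 g1
      have h := hN i (fun x => if x = 0 then g0 else g1)
      rw [pureUtil_eq, pureUtil_eq, update_comp, update_comp] at h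
      simp only [show (if (0:ZMod 2) = 0 then g0 else g1) = g0 from if_pos rfl,
        show (if (1:ZMod 2) = 0 then g0 else g1) = g1 from if_neg (by decide)] at h
      exact_mod_cast (div_le_div_iff_of_pos_right (c := (18:ℝ)) (by norm_num)).mp h
    simp only [pureUtil_eq]
    rw [zmod5_sum_univ (fun j => (uE (fun i => f i 0) (fun i => f i 1) j : ℝ) / 18)]
    rw [show ∀ a b c d e : ℝ, a/18 + b/18 + c/18 + d/18 + e/18 = (a+b+c+d+e)/18 from
      by intros; ring, div_div, div_le_div_iff₀ (by norm_num) (by norm_num)]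
    have keyR := (Nat.cast_le (α := ℝ)).mpr key
    push_cast at keyR
    linarith
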